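/- The Bernoulli shift σ on the binary sequence space Σ is Li–Yorke chaotic: there exists an uncountable set S ⊆ Σ such that for all distinct s, t ∈ S, liminf_{n→∞} d(σ^n(s), σ^n(t)) = 0 and limsup_{n→∞} d(σ^n(s), σ^n(t)) > 0. -/

import Mathlib

set_option maxHeartbeats 800000

open Filter

/-- The metric on the space of infinite binary sequences (indexed from 0). -/
noncomputable def strDist (s t : ℕ → Fin 2) : ℝ :=
  ∑' k : ℕ, |(s k : ℝ) - (t k : ℝ)| / 2 ^ k

/-- The Bernoulli (left) shift. -/
def shift (s : ℕ → Fin 2) : ℕ → Fin 2 := fun k => s (k + 1)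

lemma abs_sub_le_one (x y : Fin 2) : |(x : ℝ) - (y : ℝ)| ≤ 1 := by
  fin_cases x <;> fin_cases y <;> norm_num

lemma term_le (s t : ℕ → Fin 2) (k : ℕ) :
    |(s k : ℝ) - (t k : ℝ)| / 2 ^ k ≤ (1/2 : ℝ) ^ k := by
  rw [div_pow, one_pow]
  exact div_le_div_of_nonneg_right (abs_sub_le_one _ _) (by positivity) |>.trans_eq rfl

lemma summable_strDist (s t : ℕ → Fin 2) :
    Summable (fun k => |(s k : ℝ) - (t k : ℝ)| / 2 ^ k) :=
  Summable.of_nonneg_of_le (fun k => by positivity) (term_le s t) summable_geometric_two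

lemma strDist_nonneg (s t : ℕ → Fin 2) : 0 ≤ strDist s t :=
  tsum_nonneg (fun k => by positivity)

lemma strDist_le_two (s t : ℕ → Fin 2) : strDist s t ≤ 2 := by
  have := Summable.tsum_le_tsum (term_le s t) (summable_strDist s t) summable_geometric_two
  rw [tsum_geometric_two] at this
  exact this

lemma one_le_strDist {s t : ℕ → Fin 2} (h : s 0 ≠ t 0) : 1 ≤ strDist s t := by
  have key : ∀ x y : Fin 2, x ≠ y → (1:ℝ) ≤ |(x : ℝ) - (y : ℝ)| / 2 ^ 0 := by
    intro x y hxy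
    fin_cases x <;> fin_cases y <;> simp_all <;> norm_num
  have h0 := key _ _ h
  exact h0.trans (Summable.le_tsum (summable_strDist s t) 0 (fun i _ => by positivity))

lemma shift_iterate (s : ℕ → Fin 2) (n : ℕ) : shift^[n] s = fun i => s (n + i) := by
  induction n with
  | zero => simp
  | succ n ih => rw [Function.iterate_succ_apply', ih]; funext i; simp [shift]; ring_nf

lemma strDist_le_of_agree {s t : ℕ → Fin 2} (N : ℕ) (h : ∀ k < N, s k = t k) :
    strDist s t ≤ 2 * (1/2 : ℝ) ^ N := by
  have hsum := summable_strDist s t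
  have key := Summable.sum_add_tsum_nat_add (f := fun k => |(s k : ℝ) - (t k : ℝ)| / 2 ^ k) N hsum
  have h1 : ∑ i ∈ Finset.range N, |(s i : ℝ) - (t i : ℝ)| / 2 ^ i = 0 := by
    apply Finset.sum_eq_zero
    intro i hi
    rw [h i (Finset.mem_range.mp hi)]
    simp
  have h2 : ∑' i : ℕ, |(s (i + N) : ℝ) - (t (i + N) : ℝ)| / 2 ^ (i + N)
      ≤ ∑' i : ℕ, (1/2 : ℝ) ^ (i + N) := by
    apply Summable.tsum_le_tsum (fun i => term_le s t (i + N)) ((summable_nat_add_iff N).mpr hsum)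
      ((summable_nat_add_iff N).mpr summable_geometric_two)
  have h3 : ∑' i : ℕ, (1/2 : ℝ) ^ (i + N) = 2 * (1/2 : ℝ) ^ N := by
    simp_rw [pow_add]
    rw [tsum_mul_right, tsum_geometric_two]
  rw [strDist, ← key, h1, zero_add]
  exact h2.trans h3.le

def seqOf (a : ℕ → Fin 2) (n : ℕ) : Fin 2 :=
  if Nat.log 2 (n + 1) % 2 = 1 then a (n + 1 - 2 ^ Nat.log 2 (n + 1)) else 0

lemma log_eval {k j : ℕ} (hj : j < 2 ^ k) : Nat.log 2 (2 ^ k + j) = k :=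
  Nat.log_eq_of_pow_le_of_lt_pow (Nat.le_add_right _ _) (by rw [pow_succ]; omega)

lemma seqOf_eval (a : ℕ → Fin 2) {k j : ℕ} (hj : j < 2 ^ k) :
    seqOf a (2 ^ k - 1 + j) = if k % 2 = 1 then a j else 0 := by
  have h1 : (1:ℕ) ≤ 2 ^ k := Nat.one_le_two_pow
  have hn : 2 ^ k - 1 + j + 1 = 2 ^ k + j := by omega
  rw [seqOf, hn, log_eval hj]
  simp

lemma seqOf_injective : Function.Injective seqOf := by
  intro a b hab
  funext m
  obtain ⟨k, hk1, hk2⟩ : ∃ k, k % 2 = 1 ∧ m < 2 ^ k := by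
    refine ⟨2 * m + 1, by omega, ?_⟩
    calc m < 2 * m + 1 := by omega
    _ < 2 ^ (2 * m + 1) := Nat.lt_two_pow_self
  have h1 := seqOf_eval a hk2
  have h2 := seqOf_eval b hk2
  rw [hab] at h1
  rw [h1, hk1] at h2
  simpa using h2


lemma shift_iterate_apply (s : ℕ → Fin 2) (n i : ℕ) : shift^[n] s i = s (n + i) := by
  rw [shift_iterate]

theorem stmt19 :
    ∃ S : Set (ℕ → Fin 2), ¬ S.Countable ∧
      ∀ s ∈ S, ∀ t ∈ S, s ≠ t →
        liminf (fun n : ℕ => strDist (shift^[n] s) (shift^[n] t)) atTop = 0 ∧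
        0 < limsup (fun n : ℕ => strDist (shift^[n] s) (shift^[n] t)) atTop := by
  refine ⟨Set.range seqOf, ?_, ?_⟩
  · intro hc
    have h2 := hc.preimage seqOf_injective
    rw [Set.preimage_range] at h2
    have : Countable (ℕ → Fin 2) := Set.countable_univ_iff.mp h2
    have hu : Uncountable (ℕ → Fin 2) := by
      rw [uncountable_iff_forall_not_surjective]
      intro g hg
      obtain ⟨n, hn⟩ := hg (fun k => 1 - g k k)
      have := congrFun hn n
      omega
    exact @not_countable _ hu ‹Countable _›
  · rintro s ⟨a, rfl⟩ t ⟨b, rfl⟩ hst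
    have hab : a ≠ b := fun h => hst (h ▸ rfl)
    set f : ℕ → ℝ := fun n => strDist (shift^[n] (seqOf a)) (shift^[n] (seqOf b)) with hf
    have hf0 : ∀ n, 0 ≤ f n := fun n => strDist_nonneg _ _
    have hf2 : ∀ n, f n ≤ 2 := fun n => strDist_le_two _ _
    have hbdd_le : IsBoundedUnder (· ≤ ·) atTop f := isBoundedUnder_of ⟨2, hf2⟩
    have hbdd_ge : IsBoundedUnder (· ≥ ·) atTop f := isBoundedUnder_of ⟨0, fun n => hf0 n⟩
    -- frequently small (even blocks)
    have hsmall : ∀ ε : ℝ, 0 < ε → ∃ᶠ n in atTop, f n ≤ ε := by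
      intro ε hε
      rw [frequently_atTop]
      intro N
      obtain ⟨M, hM⟩ := exists_pow_lt_of_lt_one (show (0:ℝ) < ε / 2 by linarith)
        (show (1/2 : ℝ) < 1 by norm_num)
      set k := 2 * (N + M) with hk
      refine ⟨2 ^ k - 1, ?_, ?_⟩
      · have : k < 2 ^ k := (Nat.lt_two_pow_self (n := k))
        omega
      · have hagree : ∀ i < 2 ^ k, shift^[2 ^ k - 1] (seqOf a) i = shift^[2 ^ k - 1] (seqOf b) i := by
          intro i hi
          rw [shift_iterate_apply, shift_iterate_apply, seqOf_eval a hi, seqOf_eval b hi]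
          simp [hk, Nat.mul_mod_right]
        have hle := strDist_le_of_agree (2 ^ k) hagree
        have h1 : ((1:ℝ)/2) ^ (2 ^ k) ≤ (1/2 : ℝ) ^ M := by
          apply pow_le_pow_of_le_one (by norm_num) (by norm_num)
          calc M ≤ k := by omega
          _ ≤ 2 ^ k := ((Nat.lt_two_pow_self (n := k))).le
        calc f (2 ^ k - 1) ≤ 2 * (1/2 : ℝ) ^ (2 ^ k) := hle
        _ ≤ 2 * (1/2 : ℝ) ^ M := by linarith
        _ ≤ 2 * (ε / 2) := by linarith
        _ = ε := by ring
    -- frequently ≥ 1 (odd blocks)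
    have hbig : ∃ᶠ n in atTop, (1:ℝ) ≤ f n := by
      obtain ⟨m, hm⟩ := Function.ne_iff.mp hab
      rw [frequently_atTop]
      intro N
      set k := 2 * (N + m) + 1 with hk
      have hmk : m < 2 ^ k := by
        calc m ≤ k := by omega
        _ < 2 ^ k := (Nat.lt_two_pow_self (n := k))
      refine ⟨2 ^ k - 1 + m, ?_, ?_⟩
      · have : k < 2 ^ k := (Nat.lt_two_pow_self (n := k))
        omega
      · apply one_le_strDist
        rw [shift_iterate_apply, shift_iterate_apply, Nat.add_zero, seqOf_eval a hmk,
          seqOf_eval b hmk]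
        have hodd : k % 2 = 1 := by omega
        rw [hodd]
        simpa using hm
    constructor
    · apply le_antisymm
      · apply le_of_forall_pos_le_add
        intro ε hε
        rw [zero_add]
        exact liminf_le_of_frequently_le (hsmall ε hε) hbdd_ge
      · exact le_liminf_of_le hbdd_le.isCoboundedUnder_ge (Eventually.of_forall hf0)
    · calc (0:ℝ) < 1 := one_pos
      _ ≤ limsup f atTop := le_limsup_of_frequently_le hbig hbdd_le
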